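/- Let 0 → M_0 →(i) M →(p) M_1 → 0 be an admissible exact sequence in A, and assume every object of A is Artinian (satisfies the descending chain condition on subobjects). Then for each subobject N_1' ⊆ M_1 there exists a universal lift: a subobject N' ⊆ M with p(N') = N_1' such that every subobject of M whose image under p is N_1' contains N'. Moreover, universal lifts are closed under sums: if N' and N'' are the universal lifts of N_1' and N_1'' respectively, then N' + N'' is the universal lift of N_1' + N_1''. -/

import Mathlib

set_option maxHeartbeats 1000000
set_option synthInstance.maxHeartbeats 400000

open CategoryTheory CategoryTheory.Limits ZeroObject

universe v u

attribute [local instance] CategoryTheory.Abelian.hasFiniteBiproducts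

variable {A : Type u} [Category.{v} A] [Abelian A] [CategoryTheory.Linear ℚ A]

/-- An Abelian subcategory of `A`: a class of objects containing `0` and closed under
subobjects, quotients and finite direct sums (so that the corresponding full subcategory
is Abelian and the inclusion is exact). -/
structure AbelianSubcat (A : Type u) [Category.{v} A] [Abelian A]
    [CategoryTheory.Linear ℚ A] where
  P : A → Prop
  zero_mem : P 0
  mem_of_mono : ∀ {X Y : A} (f : X ⟶ Y), Mono f → P Y → P X
  mem_of_epi : ∀ {X Y : A} (f : X ⟶ Y), Epi f → P X → P Y
  mem_biprod : ∀ {X Y : A}, P X → P Y → P (X ⊞ Y)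

/-- The two subcategories are orthogonal: `Hom(A_0, A_1) = Hom(A_1, A_0) = 0`. -/
def OrthogonalPair (A0 A1 : AbelianSubcat A) : Prop :=
  (∀ {X Y : A}, A0.P X → A1.P Y → ∀ f : X ⟶ Y, f = 0) ∧
  (∀ {X Y : A}, A1.P X → A0.P Y → ∀ f : X ⟶ Y, f = 0)

/-- An admissible exact sequence `0 → M_0 → M → M_1 → 0` with `M_0 ∈ A_0`, `M_1 ∈ A_1`. -/
structure AdmissibleSeq (A0 A1 : AbelianSubcat A) (M0 M M1 : A)
    (i : M0 ⟶ M) (p : M ⟶ M1) : Prop where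
  zero : i ≫ p = 0
  shortExact : (ShortComplex.mk i p zero).ShortExact
  mem0 : A0.P M0
  mem1 : A1.P M1

/-- The image `p(N)` of a subobject `N ⊆ X` under a morphism `p : X ⟶ Y`. -/
noncomputable def subImg {X Y : A} (p : X ⟶ Y) (N : Subobject X) : Subobject Y :=
  imageSubobject (N.arrow ≫ p)

/-- `N` is the universal lift of the subobject `N₁ ⊆ M_1` along `p : M ↠ M_1`:
`p(N) = N₁`, and every subobject of `M` whose image under `p` is `N₁` contains `N`. -/
def IsUnivLift {X Y : A} (p : X ⟶ Y) (N1 : Subobject Y) (N : Subobject X) : Prop :=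
  subImg p N = N1 ∧ ∀ N' : Subobject X, subImg p N' = N1 → N ≤ N'

/-- `N` is the universal extension of the subobject `N₀ ⊆ M₀sub` (`M₀sub ⊆ M` a given
subobject): `N ∩ M₀sub = N₀`, and every subobject of `M` whose intersection with
`M₀sub` is `N₀` is contained in `N`. -/
def IsUnivExt {X : A} (M0sub : Subobject X) (N0 : Subobject X) (N : Subobject X) : Prop :=
  N ⊓ M0sub = N0 ∧ ∀ N' : Subobject X, N' ⊓ M0sub = N0 → N' ≤ N

/-- The `m`-th power `M^m` of an object (`M^0 = 0`). -/
noncomputable abbrev pow (M : A) (m : ℕ) : A := ⨁ (fun _ : Fin m => M)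

/-- The `n`-th power `f^n : X^n ⟶ Y^n` of a morphism. -/
noncomputable abbrev powMap {X Y : A} (f : X ⟶ Y) (n : ℕ) : pow X n ⟶ pow Y n :=
  biproduct.map (fun _ => f)

/-- The admissible exact sequence `0 → M_0 →i M →p M_1 → 0` is *right saturated* if every
`φ₁ : M_1^n ⟶ M_1^m` has a lift `φ : M^n ⟶ M^m` such that `ker(φ)` is the universal lift
of `ker(φ₁)` along `p^n`. -/
def RightSaturated {M0 M M1 : A} (i : M0 ⟶ M) (p : M ⟶ M1) : Prop :=
  ∀ (n m : ℕ) (φ1 : pow M1 n ⟶ pow M1 m),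
    ∃ φ : pow M n ⟶ pow M m,
      φ ≫ powMap p m = powMap p n ≫ φ1 ∧
      IsUnivLift (powMap p n) (kernelSubobject φ1) (kernelSubobject φ)

/-- The admissible exact sequence `0 → M_0 →i M →p M_1 → 0` is *left saturated* if every
`φ₀ : M_0^n ⟶ M_0^m` has an extension `φ : M^n ⟶ M^m` such that `im(φ)` is the universal
extension of `im(φ₀)` inside `M^m` (relative to the subobject `M_0^m ⊆ M^m`). -/
def LeftSaturated {M0 M M1 : A} (i : M0 ⟶ M) (p : M ⟶ M1) : Prop :=
  ∀ (n m : ℕ) (φ0 : pow M0 n ⟶ pow M0 m),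
    ∃ φ : pow M n ⟶ pow M m,
      powMap i n ≫ φ = φ0 ≫ powMap i m ∧
      IsUnivExt (imageSubobject (powMap i m)) (imageSubobject (φ0 ≫ powMap i m))
        (imageSubobject φ)


section UnivLiftHelpers

variable {A : Type u} [Category.{v} A] [Abelian A]

namespace UnivLiftAux

/-- Image of `epi ≫ mono` is the mono. -/
lemma epiMono_image {P Q R : A} (a : P ⟶ Q) (m : Q ⟶ R) [Epi a] [Mono m] :
    imageSubobject (a ≫ m) = Subobject.mk m := by
  refine le_antisymm (imageSubobject_le_mk m _ a rfl) ?_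
  haveI : StrongEpi a := strongEpi_of_epi a
  have fac : factorThruImageSubobject (a ≫ m) ≫ (imageSubobject (a ≫ m)).arrow = a ≫ m :=
    imageSubobject_arrow_comp _
  have sq : CommSq (factorThruImageSubobject (a ≫ m)) a (imageSubobject (a ≫ m)).arrow m :=
    ⟨by rw [fac]⟩
  exact Subobject.mk_le_of_comm sq.lift sq.fac_right

lemma epi_of_image_eq_mk {P Q R : A} (u : P ⟶ Q) (m : Q ⟶ R) [Mono m]
    (h : imageSubobject (u ≫ m) = Subobject.mk m) : Epi u := by
  set ι' := image.ι (u ≫ m) with hι'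
  have h1 : Subobject.mk ι' ≤ Subobject.mk m := le_of_eq h
  have h2 : Subobject.mk m ≤ Subobject.mk ι' := le_of_eq h.symm
  set v := Subobject.ofMkLEMk m ι' h2 with hv
  set v' := Subobject.ofMkLEMk ι' m h1 with hv'
  have hvι : v ≫ ι' = m := Subobject.ofMkLEMk_comp h2
  have hv'm : v' ≫ m = ι' := Subobject.ofMkLEMk_comp h1
  have hvv' : v ≫ v' = 𝟙 Q := by
    rw [← cancel_mono m]; rw [Category.assoc, hv'm, hvι, Category.id_comp]
  have hv'v : v' ≫ v = 𝟙 _ := by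
    haveI : Mono ι' := inferInstance
    rw [← cancel_mono ι']; rw [Category.assoc, hvι, hv'm, Category.id_comp]
  haveI : IsIso v := ⟨v', hvv', hv'v⟩
  have h3 : u ≫ v = factorThruImage (u ≫ m) := by
    haveI : Mono ι' := inferInstance
    rw [← cancel_mono ι', Category.assoc, hvι, image.fac]
  have hu : u = factorThruImage (u ≫ m) ≫ inv v := by
    rw [← h3, Category.assoc, IsIso.hom_inv_id, Category.comp_id]
  rw [hu]; infer_instance

lemma epi_imageSubobject_top {P Q : A} (a : P ⟶ Q) [Epi a] :
    imageSubobject a = ⊤ := by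
  have := epiMono_image a (𝟙 Q)
  simpa [Subobject.top_eq_id] using this

section
variable {M M1 : A} (p : M ⟶ M1)

lemma subImg_le_iff (V : Subobject M) (Z : Subobject M1) :
    imageSubobject (V.arrow ≫ p) ≤ Z ↔ Z.Factors (V.arrow ≫ p) := by
  constructor
  · intro h
    have h0 := imageSubobject_factors_comp_self (f := V.arrow ≫ p) (𝟙 _)
    rw [Category.id_comp] at h0
    exact Subobject.factors_of_le _ h h0
  · intro h
    exact imageSubobject_le _ (Z.factorThru _ h) (Z.factorThru_arrow _ h)

lemma le_pullback_iff (V : Subobject M) (Z : Subobject M1) :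
    V ≤ (Subobject.pullback p).obj Z ↔ Z.Factors (V.arrow ≫ p) := by
  refine Subobject.ind (fun Z => V ≤ (Subobject.pullback p).obj Z ↔ Z.Factors (V.arrow ≫ p)) ?_ Z
  intro X g hg
  · constructor
    · intro h
      have hh : V ≤ Subobject.mk (pullback.snd g p) := h
      have hu : Subobject.ofLEMk V (pullback.snd g p) hh ≫ pullback.snd g p = V.arrow :=
        Subobject.ofLEMk_comp hh
      rw [Subobject.mk_factors_iff]
      refine ⟨Subobject.ofLEMk V (pullback.snd g p) hh ≫ pullback.fst g p, ?_⟩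
      show (_ ≫ pullback.fst g p) ≫ g = V.arrow ≫ p
      rw [Category.assoc, pullback.condition, ← Category.assoc, hu]
    · intro h
      rw [Subobject.mk_factors_iff] at h
      obtain ⟨k, hk⟩ := h
      show V ≤ Subobject.mk (pullback.snd g p)
      exact Subobject.le_mk_of_comm (pullback.lift k V.arrow hk) (pullback.lift_snd _ _ _)

lemma subImg_gc :
    GaloisConnection (fun V : Subobject M => imageSubobject (V.arrow ≫ p))
      (fun Z : Subobject M1 => (Subobject.pullback p).obj Z) := fun V Z =>
  (subImg_le_iff p V Z).trans (le_pullback_iff p V Z).symm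

lemma frob_core {M M1 I Zo : A} (p : M ⟶ M1) (X : Subobject M) (g : Zo ⟶ M1) [Mono g]
    (e : (X : A) ⟶ I) (ι : I ⟶ M1) [Epi e] [Mono ι] (hq : e ≫ ι = X.arrow ≫ p) :
    Subobject.mk ι ⊓ Subobject.mk g ≤
      imageSubobject ((X ⊓ (Subobject.pullback p).obj (Subobject.mk g)).arrow ≫ p) := by
  have comm2 : pullback.fst ι g ≫ ι = pullback.snd ι g ≫ g := pullback.condition
  have comm1 : pullback.fst e (pullback.fst ι g) ≫ e
      = pullback.snd e (pullback.fst ι g) ≫ pullback.fst ι g := pullback.condition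
  have hmp : (pullback.fst e (pullback.fst ι g) ≫ X.arrow) ≫ p
      = pullback.snd e (pullback.fst ι g) ≫ (pullback.snd ι g ≫ g) := by
    calc (pullback.fst e (pullback.fst ι g) ≫ X.arrow) ≫ p
        = pullback.fst e (pullback.fst ι g) ≫ (X.arrow ≫ p) := Category.assoc _ _ _
    _ = pullback.fst e (pullback.fst ι g) ≫ (e ≫ ι) := by rw [hq]
    _ = (pullback.fst e (pullback.fst ι g) ≫ e) ≫ ι := (Category.assoc _ _ _).symm
    _ = (pullback.snd e (pullback.fst ι g) ≫ pullback.fst ι g) ≫ ι := by rw [comm1]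
    _ = pullback.snd e (pullback.fst ι g) ≫ (pullback.fst ι g ≫ ι) := Category.assoc _ _ _
    _ = pullback.snd e (pullback.fst ι g) ≫ (pullback.snd ι g ≫ g) := by rw [comm2]
  have hm'X : Subobject.mk (pullback.fst e (pullback.fst ι g) ≫ X.arrow) ≤ X :=
    Subobject.mk_le_of_comm _ rfl
  have hfacg : (Subobject.mk g).Factors
      ((pullback.fst e (pullback.fst ι g) ≫ X.arrow) ≫ p) := by
    rw [Subobject.mk_factors_iff]
    exact ⟨pullback.snd e (pullback.fst ι g) ≫ pullback.snd ι g,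
      by show (_ ≫ _) ≫ g = _; rw [Category.assoc]; exact hmp.symm⟩
  have h1 : (Subobject.mk (pullback.fst e (pullback.fst ι g) ≫ X.arrow)).arrow ≫ p
      = (Subobject.underlyingIso _).hom
        ≫ ((pullback.fst e (pullback.fst ι g) ≫ X.arrow) ≫ p) := by
    rw [← Category.assoc, Subobject.underlyingIso_hom_comp_eq_mk]
  have hm'pb : Subobject.mk (pullback.fst e (pullback.fst ι g) ≫ X.arrow)
      ≤ (Subobject.pullback p).obj (Subobject.mk g) := by
    rw [le_pullback_iff, h1]
    exact Subobject.factors_of_factors_right _ hfacg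
  have himg : imageSubobject
        ((Subobject.mk (pullback.fst e (pullback.fst ι g) ≫ X.arrow)).arrow ≫ p)
      = Subobject.mk (pullback.snd ι g ≫ g) := by
    rw [h1, imageSubobject_iso_comp, hmp]
    exact epiMono_image _ _
  have hRinf : Subobject.mk ι ⊓ Subobject.mk g ≤ Subobject.mk (pullback.snd ι g ≫ g) := by
    have hVι : Subobject.mk ι ⊓ Subobject.mk g ≤ Subobject.mk ι := inf_le_left
    have hVg : Subobject.mk ι ⊓ Subobject.mk g ≤ Subobject.mk g := inf_le_right
    have hu : Subobject.ofLEMk _ ι hVι ≫ ι = (Subobject.mk ι ⊓ Subobject.mk g).arrow :=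
      Subobject.ofLEMk_comp hVι
    have hw : Subobject.ofLEMk _ g hVg ≫ g = (Subobject.mk ι ⊓ Subobject.mk g).arrow :=
      Subobject.ofLEMk_comp hVg
    exact Subobject.le_mk_of_comm
      (pullback.lift (Subobject.ofLEMk _ ι hVι) (Subobject.ofLEMk _ g hVg) (by rw [hu, hw]))
      (by rw [← Category.assoc, pullback.lift_snd, hw])
  exact le_trans hRinf (le_trans (le_of_eq himg.symm)
    ((subImg_gc p).monotone_l (le_inf hm'X hm'pb)))

lemma frobenius (X : Subobject M) (Z : Subobject M1) :
    imageSubobject ((X ⊓ (Subobject.pullback p).obj Z).arrow ≫ p) =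
      imageSubobject (X.arrow ≫ p) ⊓ Z := by
  refine Subobject.ind (fun Z => imageSubobject ((X ⊓ (Subobject.pullback p).obj Z).arrow ≫ p) =
      imageSubobject (X.arrow ≫ p) ⊓ Z) ?_ Z
  intro Zo g hg
  refine le_antisymm (le_inf ((subImg_gc p).monotone_l inf_le_left)
    ((subImg_gc p).l_le inf_le_right)) ?_
  exact frob_core p X g (factorThruImage (X.arrow ≫ p)) (image.ι (X.arrow ≫ p)) (image.fac _)

lemma subImg_top (hp : Epi p) : imageSubobject ((⊤ : Subobject M).arrow ≫ p) = ⊤ := by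
  haveI := hp
  haveI : Epi ((⊤ : Subobject M).arrow ≫ p) := epi_comp _ _
  exact epi_imageSubobject_top _

lemma subImg_pullback (hp : Epi p) (Z : Subobject M1) :
    imageSubobject (((Subobject.pullback p).obj Z).arrow ≫ p) = Z := by
  have h := frobenius p ⊤ Z
  rw [top_inf_eq, subImg_top p hp, top_inf_eq] at h
  exact h

lemma subImg_bot_of_le_kernel (V : Subobject M) (h : V ≤ kernelSubobject p) :
    imageSubobject (V.arrow ≫ p) = ⊥ := by
  have h1 : V.arrow ≫ p = 0 := by
    rw [← Subobject.ofLE_arrow h, Category.assoc, kernelSubobject_arrow_comp, comp_zero]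
  rw [h1, imageSubobject_zero]

end

lemma mk_comp_le {M X : A} (S : Subobject M) (f : X ⟶ (S : A)) [Mono (f ≫ S.arrow)] :
    Subobject.mk (f ≫ S.arrow) ≤ S := by
  conv_rhs => rw [← Subobject.mk_arrow S]
  exact Subobject.mk_le_mk_of_comm f rfl

lemma mk_le_kernelSubobject {X Y Z : A} (f : X ⟶ Y) [Mono f] (g : Y ⟶ Z) (h : f ≫ g = 0) :
    Subobject.mk f ≤ kernelSubobject g :=
  Subobject.mk_le_of_comm ((kernelSubobject g).factorThru f (kernelSubobject_factors g f h))
    (Subobject.factorThru_arrow _ _ _)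

lemma comp_cokernel_zero {M : A} (V S : Subobject M) (hVS : V ≤ S) {X : A}
    (f : X ⟶ (S : A)) [Mono (f ≫ S.arrow)]
    (h : Subobject.mk (f ≫ S.arrow) ≤ V) :
    f ≫ cokernel.π (Subobject.ofLE V S hVS) = 0 := by
  have h' : Subobject.mk (f ≫ S.arrow) ≤ Subobject.mk V.arrow := by
    rwa [Subobject.mk_arrow]
  have hu : Subobject.ofMkLEMk _ _ h' ≫ V.arrow = f ≫ S.arrow := Subobject.ofMkLEMk_comp h'
  have hf : Subobject.ofMkLEMk _ _ h' ≫ Subobject.ofLE V S hVS = f := by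
    rw [← cancel_mono S.arrow, Category.assoc, Subobject.ofLE_arrow, hu]
  rw [← hf, Category.assoc, cokernel.condition, comp_zero]

lemma zero_of_sup_le {M : A} (U V S : Subobject M) (hU : U ≤ S) (hV : V ≤ S)
    (hsup : S ≤ U ⊔ V) {Z : A} (g' : (S : A) ⟶ Z)
    (h1 : Subobject.ofLE U S hU ≫ g' = 0) (h2 : Subobject.ofLE V S hV ≫ g' = 0) :
    g' = 0 := by
  have hUK : U ≤ Subobject.mk (kernel.ι g' ≫ S.arrow) :=
    Subobject.le_mk_of_comm (kernel.lift g' (Subobject.ofLE U S hU) h1)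
      (by rw [← Category.assoc, kernel.lift_ι, Subobject.ofLE_arrow])
  have hVK : V ≤ Subobject.mk (kernel.ι g' ≫ S.arrow) :=
    Subobject.le_mk_of_comm (kernel.lift g' (Subobject.ofLE V S hV) h2)
      (by rw [← Category.assoc, kernel.lift_ι, Subobject.ofLE_arrow])
  have hS : S ≤ Subobject.mk (kernel.ι g' ≫ S.arrow) := le_trans hsup (sup_le hUK hVK)
  have ht : Subobject.ofLEMk S _ hS ≫ (kernel.ι g' ≫ S.arrow) = S.arrow :=
    Subobject.ofLEMk_comp hS
  have ht2 : Subobject.ofLEMk S _ hS ≫ kernel.ι g' = 𝟙 _ := by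
    rw [← cancel_mono S.arrow, Category.assoc, ht, Category.id_comp]
  calc g' = (Subobject.ofLEMk S _ hS ≫ kernel.ι g') ≫ g' := by rw [ht2, Category.id_comp]
  _ = 0 := by rw [Category.assoc, kernel.condition, comp_zero]

lemma epi_ofLE_comp_cokernel {M : A} (U V S : Subobject M) (hU : U ≤ S) (hV : V ≤ S)
    (hsup : S ≤ U ⊔ V) :
    Epi (Subobject.ofLE U S hU ≫ cokernel.π (Subobject.ofLE V S hV)) := by
  apply Abelian.epi_of_cokernel_π_eq_zero
  have h1 : Subobject.ofLE U S hU ≫ (cokernel.π (Subobject.ofLE V S hV) ≫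
      cokernel.π (Subobject.ofLE U S hU ≫ cokernel.π (Subobject.ofLE V S hV))) = 0 := by
    rw [← Category.assoc, cokernel.condition]
  have h2 : Subobject.ofLE V S hV ≫ (cokernel.π (Subobject.ofLE V S hV) ≫
      cokernel.π (Subobject.ofLE U S hU ≫ cokernel.π (Subobject.ofLE V S hV))) = 0 := by
    rw [← Category.assoc, cokernel.condition, zero_comp]
  have h3 := zero_of_sup_le U V S hU hV hsup _ h1 h2
  exact zero_of_epi_comp (cokernel.π (Subobject.ofLE V S hV)) h3

lemma lemmaE {M M1 : A} (p : M ⟶ M1) (T S : Subobject M) (hTS : T ≤ S)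
    (hker : S ⊓ kernelSubobject p ≤ T)
    (him : imageSubobject (S.arrow ≫ p) ≤ imageSubobject (T.arrow ≫ p)) :
    S ≤ T := by
  have hπ0 : cokernel.π (Subobject.ofLE T S hTS) = 0 := by
    have hw : kernel.ι (factorThruImage (S.arrow ≫ p)) ≫
        cokernel.π (Subobject.ofLE T S hTS) = 0 := by
      apply comp_cokernel_zero T S hTS
      refine le_trans (le_inf (mk_comp_le S _) ?_) hker
      have hz0 : (kernel.ι (factorThruImage (S.arrow ≫ p)) ≫ S.arrow) ≫ p = 0 := by
        rw [Category.assoc]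
        calc kernel.ι (factorThruImage (S.arrow ≫ p)) ≫ S.arrow ≫ p
            = kernel.ι (factorThruImage (S.arrow ≫ p)) ≫
              factorThruImage (S.arrow ≫ p) ≫ image.ι (S.arrow ≫ p) := by rw [image.fac]
        _ = 0 := by rw [← Category.assoc, kernel.condition, zero_comp]
      exact mk_le_kernelSubobject _ _ hz0
    have heψ := Abelian.comp_epiDesc (factorThruImage (S.arrow ≫ p))
      (cokernel.π (Subobject.ofLE T S hTS)) hw
    have hfT : (Subobject.ofLE T S hTS ≫ factorThruImage (S.arrow ≫ p)) ≫
        image.ι (S.arrow ≫ p) = T.arrow ≫ p := by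
      rw [Category.assoc, image.fac, ← Category.assoc, Subobject.ofLE_arrow]
    have himT : imageSubobject ((Subobject.ofLE T S hTS ≫ factorThruImage (S.arrow ≫ p)) ≫
        image.ι (S.arrow ≫ p)) = Subobject.mk (image.ι (S.arrow ≫ p)) := by
      refine le_antisymm (imageSubobject_le_mk _ _ _ rfl) ?_
      have h5 : Subobject.mk (image.ι (S.arrow ≫ p)) = imageSubobject (S.arrow ≫ p) := rfl
      rw [h5, hfT]
      exact him
    haveI hepi : Epi (Subobject.ofLE T S hTS ≫ factorThruImage (S.arrow ≫ p)) :=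
      epi_of_image_eq_mk _ _ himT
    have hz : (Subobject.ofLE T S hTS ≫ factorThruImage (S.arrow ≫ p)) ≫
        Abelian.epiDesc (factorThruImage (S.arrow ≫ p))
          (cokernel.π (Subobject.ofLE T S hTS)) hw = 0 := by
      rw [Category.assoc, heψ, cokernel.condition]
    have hψ0 := zero_of_epi_comp _ hz
    rw [← heψ, hψ0, comp_zero]
  haveI : Epi (Subobject.ofLE T S hTS) := Abelian.epi_of_cokernel_π_eq_zero _ hπ0
  haveI : IsIso (Subobject.ofLE T S hTS) := isIso_of_mono_of_epi _
  exact Subobject.le_of_comm (inv (Subobject.ofLE T S hTS))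
    (by rw [IsIso.inv_comp_eq, Subobject.ofLE_arrow])

end UnivLiftAux


end UnivLiftHelpers

section UnivLiftMain

variable {A : Type u} [Category.{v} A] [Abelian A] [CategoryTheory.Linear ℚ A]

set_option linter.unusedSectionVars false in
theorem exists_universal_lift' (A0 A1 : AbelianSubcat A) (horth : OrthogonalPair A0 A1)
    (M0 M M1 : A) (i : M0 ⟶ M) (p : M ⟶ M1) (hadm : AdmissibleSeq A0 A1 M0 M M1 i p)
    (hart : ∀ X : A, WellFoundedLT (Subobject X)) :
    (∀ N1 : Subobject M1, ∃ N : Subobject M, IsUnivLift p N1 N) ∧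
    (∀ (N1 N1' : Subobject M1) (N N' : Subobject M),
      IsUnivLift p N1 N → IsUnivLift p N1' N' → IsUnivLift p (N1 ⊔ N1') (N ⊔ N')) := by
  classical
  haveI hepi_p : Epi p := hadm.shortExact.epi_g
  haveI hmono_i : Mono i := hadm.shortExact.mono_f
  have gc := UnivLiftAux.subImg_gc p
  have subImg_eq : ∀ V : Subobject M, subImg p V = imageSubobject (V.arrow ≫ p) :=
    fun _ => rfl
  -- A0-membership of subobjects of the kernel
  have hA0K : ∀ V : Subobject M, V ≤ kernelSubobject p → A0.P (V : A) := by
    intro V hV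
    have hker : A0.P (kernel p) := by
      have hlim := hadm.shortExact.exact.fIsKernel
      have e : M0 ≅ kernel p := hlim.conePointUniqueUpToIso (limit.isLimit _)
      haveI : IsIso e.inv := inferInstance
      exact A0.mem_of_mono e.inv inferInstance hadm.mem0
    have hKobj : A0.P ((kernelSubobject p : Subobject M) : A) :=
      A0.mem_of_mono (kernelSubobjectIso p).hom inferInstance hker
    exact A0.mem_of_mono (Subobject.ofLE V _ hV) inferInstance hKobj
  -- the key step: a minimal lift is a universal lift
  have key : ∀ N1 : Subobject M1, ∀ N : Subobject M, subImg p N = N1 →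
      (∀ N'' : Subobject M, subImg p N'' = N1 → ¬ N'' < N) → IsUnivLift p N1 N := by
    intro N1 N hN hmin
    refine ⟨hN, fun N' hN' => ?_⟩
    -- notation
    have hsup : subImg p (N ⊔ N') = N1 := by
      rw [subImg_eq, gc.l_sup, ← subImg_eq, ← subImg_eq, hN, hN', sup_idem]
    -- Stage A : N ⊔ N' = N' ⊔ ((N ⊔ N') ⊓ kernel)
    have hA : (N ⊔ N') ≤ N' ⊔ ((N ⊔ N') ⊓ kernelSubobject p) := by
      refine UnivLiftAux.lemmaE p _ _ (sup_le le_sup_right inf_le_left) le_sup_right ?_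
      have h1 : imageSubobject ((N ⊔ N').arrow ≫ p) = N1 := hsup
      have h2 : imageSubobject (N'.arrow ≫ p) = N1 := hN'
      rw [h1, ← h2]
      exact gc.monotone_l le_sup_left
    -- Stage E : the quotient (N ⊔ N') / N' is in A0
    have hE0 : A0.P (cokernel (Subobject.ofLE N' (N ⊔ N') le_sup_right)) := by
      have hepi := UnivLiftAux.epi_ofLE_comp_cokernel ((N ⊔ N') ⊓ kernelSubobject p) N'
        (N ⊔ N') inf_le_left le_sup_right (hA.trans (le_of_eq (sup_comm _ _)))
      exact A0.mem_of_epi _ hepi (hA0K _ inf_le_right)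
    -- Stage D : the quotient N / (N ⊓ N') is in A0
    have hD0 : A0.P (cokernel (Subobject.ofLE (N ⊓ N') N inf_le_left)) := by
      have hj : Epi (Subobject.ofLE N (N ⊔ N') le_sup_left ≫
          cokernel.π (Subobject.ofLE N' (N ⊔ N') le_sup_right)) :=
        UnivLiftAux.epi_ofLE_comp_cokernel N N' (N ⊔ N') le_sup_left le_sup_right le_rfl
      haveI := hj
      have hcond : (kernel.ι (Subobject.ofLE N (N ⊔ N') le_sup_left ≫
          cokernel.π (Subobject.ofLE N' (N ⊔ N') le_sup_right)) ≫
          Subobject.ofLE N (N ⊔ N') le_sup_left) ≫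
          cokernel.π (Subobject.ofLE N' (N ⊔ N') le_sup_right) = 0 := by
        rw [Category.assoc]
        exact kernel.condition _
      have humono := Abelian.monoLift_comp (Subobject.ofLE N' (N ⊔ N') le_sup_right) _ hcond
      have hw : kernel.ι (Subobject.ofLE N (N ⊔ N') le_sup_left ≫
          cokernel.π (Subobject.ofLE N' (N ⊔ N') le_sup_right)) ≫
          cokernel.π (Subobject.ofLE (N ⊓ N') N inf_le_left) = 0 := by
        apply UnivLiftAux.comp_cokernel_zero (N ⊓ N') N inf_le_left
        refine le_inf (UnivLiftAux.mk_comp_le N _) ?_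
        refine Subobject.mk_le_of_comm (Abelian.monoLift
          (Subobject.ofLE N' (N ⊔ N') le_sup_right) _ hcond) ?_
        rw [← Subobject.ofLE_arrow (le_sup_right : N' ≤ N ⊔ N'), ← Category.assoc, humono,
          Category.assoc, Subobject.ofLE_arrow]
      have hcomp := Abelian.comp_epiDesc (Subobject.ofLE N (N ⊔ N') le_sup_left ≫
        cokernel.π (Subobject.ofLE N' (N ⊔ N') le_sup_right))
        (cokernel.π (Subobject.ofLE (N ⊓ N') N inf_le_left)) hw
      haveI : Epi ((Subobject.ofLE N (N ⊔ N') le_sup_left ≫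
          cokernel.π (Subobject.ofLE N' (N ⊔ N') le_sup_right)) ≫
          Abelian.epiDesc (Subobject.ofLE N (N ⊔ N') le_sup_left ≫
            cokernel.π (Subobject.ofLE N' (N ⊔ N') le_sup_right))
            (cokernel.π (Subobject.ofLE (N ⊓ N') N inf_le_left)) hw) := by
        rw [hcomp]; infer_instance
      exact A0.mem_of_epi (Abelian.epiDesc (Subobject.ofLE N (N ⊔ N') le_sup_left ≫
        cokernel.π (Subobject.ofLE N' (N ⊔ N') le_sup_right))
        (cokernel.π (Subobject.ofLE (N ⊓ N') N inf_le_left)) hw)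
        (epi_of_epi (Subobject.ofLE N (N ⊔ N') le_sup_left ≫
          cokernel.π (Subobject.ofLE N' (N ⊔ N') le_sup_right)) _) hE0
    -- Stage Q : the quotient Q = N / ((N ⊓ N') ⊔ (N ⊓ K)) is in A0 and in A1
    have hTN : (N ⊓ N') ⊔ (N ⊓ kernelSubobject p) ≤ N := sup_le inf_le_left inf_le_left
    have hQ0 : A0.P (cokernel (Subobject.ofLE _ N hTN)) := by
      have hz : Subobject.ofLE (N ⊓ N') N inf_le_left ≫
          cokernel.π (Subobject.ofLE _ N hTN) = 0 := by
        rw [← Subobject.ofLE_comp_ofLE _ ((N ⊓ N') ⊔ (N ⊓ kernelSubobject p)) _ le_sup_left hTN,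
          Category.assoc, cokernel.condition, comp_zero]
      have hcomp := cokernel.π_desc (Subobject.ofLE (N ⊓ N') N inf_le_left)
        (cokernel.π (Subobject.ofLE _ N hTN)) hz
      haveI : Epi (cokernel.π (Subobject.ofLE (N ⊓ N') N inf_le_left) ≫
          cokernel.desc (Subobject.ofLE (N ⊓ N') N inf_le_left)
            (cokernel.π (Subobject.ofLE _ N hTN)) hz) := by
        rw [hcomp]; infer_instance
      exact A0.mem_of_epi (cokernel.desc (Subobject.ofLE (N ⊓ N') N inf_le_left)
        (cokernel.π (Subobject.ofLE _ N hTN)) hz)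
        (epi_of_epi (cokernel.π (Subobject.ofLE (N ⊓ N') N inf_le_left)) _) hD0
    have hQ1 : A1.P (cokernel (Subobject.ofLE _ N hTN)) := by
      have hz0 : (kernel.ι (factorThruImage (N.arrow ≫ p)) ≫ N.arrow) ≫ p = 0 := by
        rw [Category.assoc]
        calc kernel.ι (factorThruImage (N.arrow ≫ p)) ≫ N.arrow ≫ p
            = kernel.ι (factorThruImage (N.arrow ≫ p)) ≫
              factorThruImage (N.arrow ≫ p) ≫ image.ι (N.arrow ≫ p) := by rw [image.fac]
        _ = 0 := by rw [← Category.assoc, kernel.condition, zero_comp]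
      have hw : kernel.ι (factorThruImage (N.arrow ≫ p)) ≫
          cokernel.π (Subobject.ofLE _ N hTN) = 0 := by
        apply UnivLiftAux.comp_cokernel_zero _ N hTN
        refine le_trans (le_inf (UnivLiftAux.mk_comp_le N _)
          (UnivLiftAux.mk_le_kernelSubobject _ _ hz0)) le_sup_right
      have hcomp := Abelian.comp_epiDesc (factorThruImage (N.arrow ≫ p))
        (cokernel.π (Subobject.ofLE _ N hTN)) hw
      haveI : Epi (factorThruImage (N.arrow ≫ p) ≫ Abelian.epiDesc (factorThruImage (N.arrow ≫ p))
          (cokernel.π (Subobject.ofLE _ N hTN)) hw) := by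
        rw [hcomp]; infer_instance
      have hI : A1.P (image (N.arrow ≫ p)) :=
        A1.mem_of_mono (image.ι (N.arrow ≫ p)) inferInstance hadm.mem1
      exact A1.mem_of_epi (Abelian.epiDesc (factorThruImage (N.arrow ≫ p))
        (cokernel.π (Subobject.ofLE _ N hTN)) hw)
        (epi_of_epi (factorThruImage (N.arrow ≫ p)) _) hI
    -- orthogonality : Q = 0, hence N ≤ (N ⊓ N') ⊔ (N ⊓ K)
    have hid : 𝟙 (cokernel (Subobject.ofLE _ N hTN)) = 0 := horth.1 hQ0 hQ1 _
    have hπQ0 : cokernel.π (Subobject.ofLE _ N hTN) = 0 := by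
      rw [← Category.comp_id (cokernel.π _), hid, comp_zero]
    haveI : Epi (Subobject.ofLE _ N hTN) := Abelian.epi_of_cokernel_π_eq_zero _ hπQ0
    haveI : IsIso (Subobject.ofLE _ N hTN) := isIso_of_mono_of_epi _
    have hNT : N ≤ (N ⊓ N') ⊔ (N ⊓ kernelSubobject p) :=
      Subobject.le_of_comm (inv (Subobject.ofLE _ N hTN))
        (by rw [IsIso.inv_comp_eq, Subobject.ofLE_arrow])
    -- conclude
    have hKle : kernelSubobject p ≤
        (Subobject.pullback p).obj (subImg p (N ⊓ N')) := by
      apply gc.le_u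
      have : imageSubobject ((kernelSubobject p).arrow ≫ p) = ⊥ :=
        UnivLiftAux.subImg_bot_of_le_kernel p _ le_rfl
      rw [this]
      exact bot_le
    have hTle : (N ⊓ N') ⊔ (N ⊓ kernelSubobject p) ≤
        (Subobject.pullback p).obj (subImg p (N ⊓ N')) :=
      sup_le (gc.le_u_l _) (le_trans inf_le_right hKle)
    have hNZ : N1 ≤ subImg p (N ⊓ N') := by
      rw [← hN]
      exact gc.l_le (le_trans hNT hTle)
    have hZ : subImg p (N ⊓ N') = N1 := by
      refine le_antisymm ?_ hNZ
      rw [← hN']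
      exact gc.monotone_l inf_le_right
    rcases lt_or_eq_of_le (inf_le_left : N ⊓ N' ≤ N) with hlt | heq
    · exact absurd hlt (hmin _ hZ)
    · rw [← heq]
      exact inf_le_right
  constructor
  · intro N1
    have hne : ({ W : Subobject M | subImg p W = N1 } : Set (Subobject M)).Nonempty :=
      ⟨(Subobject.pullback p).obj N1, UnivLiftAux.subImg_pullback p hepi_p N1⟩
    obtain ⟨N, hNmem, hmin⟩ := (hart M).wf.has_min _ hne
    exact ⟨N, key N1 N hNmem (fun N'' h'' => hmin N'' h'')⟩
  · intro N1 N1' N N' hN hN'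
    constructor
    · rw [subImg_eq, gc.l_sup, ← subImg_eq, ← subImg_eq, hN.1, hN'.1]
    · intro N'' hN''
      have hsub : ∀ (Z1 : Subobject M1) (W : Subobject M), IsUnivLift p Z1 W →
          Z1 ≤ N1 ⊔ N1' → W ≤ N'' := by
        intro Z1 W hW hle
        have hfr := UnivLiftAux.frobenius p N'' Z1
        have hthis : subImg p (N'' ⊓ (Subobject.pullback p).obj Z1) = Z1 := by
          rw [subImg_eq, hfr]
          have h2 : imageSubobject (N''.arrow ≫ p) = N1 ⊔ N1' := hN''
          rw [h2]
          exact inf_eq_right.2 hle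
        exact le_trans (hW.2 _ hthis) inf_le_left
      exact sup_le (hsub N1 N hN le_sup_left) (hsub N1' N' hN' le_sup_right)

end UnivLiftMain

/-- **Lemma (`LEMMAUNIVERSAL` 1).** Let `0 → M_0 →i M →p M_1 → 0` be an admissible exact
sequence and assume every object of `A` is Artinian (DCC on subobjects). Then every
subobject `N₁ ⊆ M_1` admits a universal lift `N ⊆ M`; moreover universal lifts are closed
under sums. -/
theorem exists_universal_lift (A0 A1 : AbelianSubcat A) (horth : OrthogonalPair A0 A1)
    (M0 M M1 : A) (i : M0 ⟶ M) (p : M ⟶ M1) (hadm : AdmissibleSeq A0 A1 M0 M M1 i p)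
    (hart : ∀ X : A, WellFoundedLT (Subobject X)) :
    (∀ N1 : Subobject M1, ∃ N : Subobject M, IsUnivLift p N1 N) ∧
    (∀ (N1 N1' : Subobject M1) (N N' : Subobject M),
      IsUnivLift p N1 N → IsUnivLift p N1' N' → IsUnivLift p (N1 ⊔ N1') (N ⊔ N')) :=
  exists_universal_lift' A0 A1 horth M0 M M1 i p hadm hart
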